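/- Let ν ∈ (0,1), R > 0, and a > 0 satisfy cos(aR − νπ/2 + π/4) ≠ 0 and cos(aR + νπ/2 + π/4) ≠ 0. Then for z = a + iy with y ∈ ℝ, the quotient cos(zR − νπ/2 + π/4)/cos(zR + νπ/2 + π/4) equals C·(1 + e^{-2|Im(zR)|}C′/(1 + e^{-2|Im(zR)|}C″)) with C = exp(i·sign(Im z)·νπ), and in particular the quotient tends to C ≠ 0 as |Im z| → ∞; consequently its modulus is bounded above and below by positive constants depending only on a, ν, R on the vertical line Re z = a. -/

import Mathlib

open Filter Topology Complex

lemma half_key (A B : ℂ) : (Complex.exp (A + B) + Complex.exp A)/2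
    = Complex.exp A / 2 * (1 + Complex.exp B) := by
  rw [mul_add, mul_one, div_mul_eq_mul_div, ← Complex.exp_add]; ring

lemma cos_factor (s t θ : ℝ) (hs : s = 1 ∨ s = -1) (hst : |t| = s * t) :
    Complex.cos ((θ:ℂ) + (t:ℂ) * I) =
      Complex.exp (((|t| : ℝ) : ℂ) - (s:ℂ) * (θ:ℂ) * I) / 2 *
        (1 + ((Real.exp (-2 * |t|) : ℝ) : ℂ) * Complex.exp ((s:ℂ) * ((2*θ : ℝ):ℂ) * I)) := by
  rw [Complex.cos, Complex.ofReal_exp, ← Complex.exp_add]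
  rcases hs with h | h <;> subst h
  · have habs : |t| = t := by linarith
    rw [habs, ← half_key]
    congr 2 <;> (congr 1; push_cast; ring_nf; rw [Complex.I_sq]; ring)
  · have habs : |t| = -t := by linarith
    rw [habs, ← half_key, add_comm (Complex.exp _)]
    congr 2 <;> (congr 1; push_cast; ring_nf; rw [Complex.I_sq]; ring)

lemma one_add_ne (t θ : ℝ) (s : ℝ) (ht : t ≠ 0) :
    (1 : ℂ) + ((Real.exp (-2 * |t|) : ℝ) : ℂ) * Complex.exp ((s:ℂ) * ((2*θ : ℝ):ℂ) * I) ≠ 0 := by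
  intro h
  have habs : ‖(((Real.exp (-2 * |t|) : ℝ) : ℂ) * Complex.exp ((s:ℂ) * ((2*θ : ℝ):ℂ) * I))‖
      = Real.exp (-2 * |t|) := by
    rw [norm_mul, Complex.norm_exp]
    simp [Complex.mul_I_re, Complex.norm_exp]
  have hlt : Real.exp (-2 * |t|) < 1 := by
    rw [Real.exp_lt_one_iff]
    have : 0 < |t| := abs_pos.mpr ht
    linarith
  have h1 : ‖(1:ℂ)‖
      = ‖(-(((Real.exp (-2 * |t|) : ℝ) : ℂ) * Complex.exp ((s:ℂ) * ((2*θ : ℝ):ℂ) * I)))‖ :=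
    congrArg _ (by linear_combination h)
  rw [norm_neg, habs, norm_one] at h1
  linarith

lemma cos_quot_key (s t θ₁ θ₂ : ℝ) (hs : s = 1 ∨ s = -1) (hst : |t| = s * t) (ht : t ≠ 0) :
    Complex.cos ((θ₁:ℂ) + (t:ℂ) * I) / Complex.cos ((θ₂:ℂ) + (t:ℂ) * I)
      = Complex.exp ((s:ℂ) * ((θ₂ - θ₁ : ℝ):ℂ) * I) *
        (1 + (((Real.exp (-2 * |t|) : ℝ) : ℂ) *
            (Complex.exp ((s:ℂ) * ((2*θ₁ : ℝ):ℂ) * I) - Complex.exp ((s:ℂ) * ((2*θ₂ : ℝ):ℂ) * I))) /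
          (1 + ((Real.exp (-2 * |t|) : ℝ) : ℂ) * Complex.exp ((s:ℂ) * ((2*θ₂ : ℝ):ℂ) * I))) := by
  rw [cos_factor s t θ₁ hs hst, cos_factor s t θ₂ hs hst]
  have h2' := one_add_ne t θ₂ s ht
  have hE : Complex.exp ((s:ℂ) * ((θ₂ - θ₁ : ℝ):ℂ) * I) * Complex.exp (((|t| : ℝ) : ℂ) - (s:ℂ) * (θ₂:ℂ) * I)
      = Complex.exp (((|t| : ℝ) : ℂ) - (s:ℂ) * (θ₁:ℂ) * I) := by
    rw [← Complex.exp_add]; congr 1; push_cast; ring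
  generalize Complex.exp ((s:ℂ) * ((θ₂ - θ₁ : ℝ):ℂ) * I) = C at *
  generalize ((Real.exp (-2 * |t|) : ℝ) : ℂ) = r at *
  generalize Complex.exp ((s:ℂ) * ((2*θ₁ : ℝ):ℂ) * I) = u₁ at *
  generalize Complex.exp ((s:ℂ) * ((2*θ₂ : ℝ):ℂ) * I) = u₂ at *
  generalize hA1g : Complex.exp (((|t| : ℝ) : ℂ) - (s:ℂ) * (θ₁:ℂ) * I) = A₁ at *
  generalize hA2g : Complex.exp (((|t| : ℝ) : ℂ) - (s:ℂ) * (θ₂:ℂ) * I) = A₂ at *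
  have hA2 : A₂ ≠ 0 := hA2g ▸ Complex.exp_ne_zero _
  field_simp
  linear_combination (-(1 + r*u₁)) * hE

lemma cos_ne_zero' (θ t : ℝ) (h : Real.cos θ ≠ 0) : Complex.cos ((θ:ℂ) + (t:ℂ) * I) ≠ 0 := by
  intro h0
  rw [Complex.cos_eq_zero_iff] at h0
  obtain ⟨k, hk⟩ := h0
  rw [show ((2*(k:ℂ)+1) * (Real.pi:ℂ) / 2 : ℂ) = (((2*(k:ℝ)+1) * Real.pi / 2 : ℝ) : ℂ) from by
    push_cast; ring] at hk
  rw [Complex.ext_iff] at hk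
  simp [Complex.ofReal_re, Complex.ofReal_im] at hk
  apply h
  rw [Real.cos_eq_zero_iff]
  exact ⟨k, by push_cast; linarith [hk.1]⟩

lemma bdd_aux (f : ℝ → ℝ) (hc : Continuous f) (hpos : ∀ y, 0 < f y)
    (h₁ : Tendsto f atTop (𝓝 1)) (h₂ : Tendsto f atBot (𝓝 1)) :
    ∃ c₁ c₂ : ℝ, 0 < c₁ ∧ ∀ y, c₁ ≤ f y ∧ f y ≤ c₂ := by
  have hI : Set.Icc (1/2 : ℝ) 2 ∈ 𝓝 (1:ℝ) := Icc_mem_nhds (by norm_num) (by norm_num)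
  obtain ⟨M₁, hM₁⟩ := (h₁.eventually_mem hI).exists_forall_of_atTop
  obtain ⟨M₂, hM₂⟩ := (h₂.eventually_mem hI).exists_forall_of_atBot
  set B := |M₁| + |M₂| with hB
  have hBnn : 0 ≤ B := by positivity
  have hK : IsCompact (Set.Icc (-B) B) := isCompact_Icc
  have hne : (Set.Icc (-B) B).Nonempty := ⟨0, by constructor <;> linarith⟩
  obtain ⟨xm, _, hxm⟩ := hK.exists_isMinOn hne hc.continuousOn
  obtain ⟨xM, _, hxM⟩ := hK.exists_isMaxOn hne hc.continuousOn
  refine ⟨min (1/2) (f xm), max 2 (f xM), lt_min (by norm_num) (hpos xm), fun y => ?_⟩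
  rcases le_or_gt y (-B) with hy | hy
  · have := hM₂ y (by have := abs_nonneg M₁; have h2 := neg_abs_le M₂; linarith)
    constructor
    · exact le_trans (min_le_left _ _) this.1
    · exact le_trans this.2 (le_max_left _ _)
  rcases le_or_gt B y with hy' | hy'
  · have := hM₁ y (by have := abs_nonneg M₂; have h2 := le_abs_self M₁; linarith)
    constructor
    · exact le_trans (min_le_left _ _) this.1
    · exact le_trans this.2 (le_max_left _ _)
  · have hmem : y ∈ Set.Icc (-B) B := ⟨hy.le, hy'.le⟩
    exact ⟨le_trans (min_le_right _ _) (hxm hmem), le_trans (hxM hmem) (le_max_right _ _)⟩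

/-- The cosine quotient appearing in the asymptotics of `F(z)` on the line `Re z = a`. -/
noncomputable def cosQuot (ν R a : ℝ) (y : ℝ) : ℂ :=
  Complex.cos (((a : ℂ) + (y : ℂ) * Complex.I) * (R : ℂ) -
      (ν : ℂ) * (Real.pi : ℂ) / 2 + (Real.pi : ℂ) / 4) /
    Complex.cos (((a : ℂ) + (y : ℂ) * Complex.I) * (R : ℂ) +
      (ν : ℂ) * (Real.pi : ℂ) / 2 + (Real.pi : ℂ) / 4)


set_option maxHeartbeats 1600000 in
/-- the explicit form of the cosine quotient on the line `Re z = a`, its limits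
as `|Im z| → ∞`, and the resulting two-sided bounds on its modulus. -/
theorem stmt16 (ν R a : ℝ) (hν : ν ∈ Set.Ioo (0:ℝ) 1) (hR : 0 < R) (ha : 0 < a)
    (h1 : Real.cos (a * R - ν * Real.pi / 2 + Real.pi / 4) ≠ 0)
    (h2 : Real.cos (a * R + ν * Real.pi / 2 + Real.pi / 4) ≠ 0) :
    (∀ y : ℝ, y ≠ 0 →
      cosQuot ν R a y =
        Complex.exp (Complex.I * ((Real.sign y : ℝ) : ℂ) * (ν : ℂ) * (Real.pi : ℂ)) *
          (1 + (((Real.exp (-2 * |y * R|) : ℝ) : ℂ) *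
                (Complex.exp (Complex.I * ((Real.sign y : ℝ) : ℂ) *
                    (((2 * a * R - ν * Real.pi + Real.pi / 2 : ℝ)) : ℂ)) -
                 Complex.exp (Complex.I * ((Real.sign y : ℝ) : ℂ) *
                    (((2 * a * R + ν * Real.pi + Real.pi / 2 : ℝ)) : ℂ)))) /
               (1 + ((Real.exp (-2 * |y * R|) : ℝ) : ℂ) *
                 Complex.exp (Complex.I * ((Real.sign y : ℝ) : ℂ) *
                    (((2 * a * R + ν * Real.pi + Real.pi / 2 : ℝ)) : ℂ))))) ∧
    Tendsto (cosQuot ν R a) atTop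
      (𝓝 (Complex.exp (Complex.I * (ν : ℂ) * (Real.pi : ℂ)))) ∧
    Tendsto (cosQuot ν R a) atBot
      (𝓝 (Complex.exp (-(Complex.I * (ν : ℂ) * (Real.pi : ℂ))))) ∧
    ∃ c₁ c₂ : ℝ, 0 < c₁ ∧ ∀ y : ℝ,
      c₁ ≤ ‖cosQuot ν R a y‖ ∧ ‖cosQuot ν R a y‖ ≤ c₂ := by
  set θ₁ : ℝ := a * R - ν * Real.pi / 2 + Real.pi / 4 with hθ₁
  set θ₂ : ℝ := a * R + ν * Real.pi / 2 + Real.pi / 4 with hθ₂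
  have hq : ∀ y : ℝ, cosQuot ν R a y
      = Complex.cos ((θ₁:ℂ) + ((y*R : ℝ):ℂ) * I) / Complex.cos ((θ₂:ℂ) + ((y*R : ℝ):ℂ) * I) := by
    intro y
    unfold cosQuot
    congr 2 <;> simp only [hθ₁, hθ₂] <;> push_cast <;> ring
  have hmain : ∀ s : ℝ, (s = 1 ∨ s = -1) → ∀ y : ℝ, |y*R| = s*(y*R) → y ≠ 0 →
      cosQuot ν R a y =
        Complex.exp (Complex.I * ((s : ℝ) : ℂ) * (ν : ℂ) * (Real.pi : ℂ)) *
          (1 + (((Real.exp (-2 * |y * R|) : ℝ) : ℂ) *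
                (Complex.exp (Complex.I * ((s : ℝ) : ℂ) *
                    (((2 * a * R - ν * Real.pi + Real.pi / 2 : ℝ)) : ℂ)) -
                 Complex.exp (Complex.I * ((s : ℝ) : ℂ) *
                    (((2 * a * R + ν * Real.pi + Real.pi / 2 : ℝ)) : ℂ)))) /
               (1 + ((Real.exp (-2 * |y * R|) : ℝ) : ℂ) *
                 Complex.exp (Complex.I * ((s : ℝ) : ℂ) *
                    (((2 * a * R + ν * Real.pi + Real.pi / 2 : ℝ)) : ℂ)))) := by
    intro s hs y hst hy
    rw [hq, cos_quot_key s (y*R) θ₁ θ₂ hs hst (mul_ne_zero hy hR.ne')]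
    have e1 : Complex.exp ((s:ℂ) * ((θ₂ - θ₁ : ℝ):ℂ) * I)
        = Complex.exp (Complex.I * ((s : ℝ) : ℂ) * (ν : ℂ) * (Real.pi : ℂ)) := by
      congr 1; simp only [hθ₁, hθ₂]; push_cast; ring
    have e2 : Complex.exp ((s:ℂ) * ((2*θ₁ : ℝ):ℂ) * I)
        = Complex.exp (Complex.I * ((s : ℝ) : ℂ) * (((2 * a * R - ν * Real.pi + Real.pi / 2 : ℝ)) : ℂ)) := by
      congr 1; simp only [hθ₁]; push_cast; ring
    have e3 : Complex.exp ((s:ℂ) * ((2*θ₂ : ℝ):ℂ) * I)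
        = Complex.exp (Complex.I * ((s : ℝ) : ℂ) * (((2 * a * R + ν * Real.pi + Real.pi / 2 : ℝ)) : ℂ)) := by
      congr 1; simp only [hθ₂]; push_cast; ring
    rw [e1, e2, e3]
  have part1 : ∀ y : ℝ, y ≠ 0 →
      cosQuot ν R a y =
        Complex.exp (Complex.I * ((Real.sign y : ℝ) : ℂ) * (ν : ℂ) * (Real.pi : ℂ)) *
          (1 + (((Real.exp (-2 * |y * R|) : ℝ) : ℂ) *
                (Complex.exp (Complex.I * ((Real.sign y : ℝ) : ℂ) *
                    (((2 * a * R - ν * Real.pi + Real.pi / 2 : ℝ)) : ℂ)) -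
                 Complex.exp (Complex.I * ((Real.sign y : ℝ) : ℂ) *
                    (((2 * a * R + ν * Real.pi + Real.pi / 2 : ℝ)) : ℂ)))) /
               (1 + ((Real.exp (-2 * |y * R|) : ℝ) : ℂ) *
                 Complex.exp (Complex.I * ((Real.sign y : ℝ) : ℂ) *
                    (((2 * a * R + ν * Real.pi + Real.pi / 2 : ℝ)) : ℂ)))) := by
    intro y hy
    rcases hy.lt_or_gt with hneg | hpos
    · rw [Real.sign_of_neg hneg]
      exact hmain (-1) (Or.inr rfl) y (by rw [abs_of_neg (by nlinarith : y*R < 0)]; ring) hy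
    · rw [Real.sign_of_pos hpos]
      exact hmain 1 (Or.inl rfl) y (by rw [abs_of_pos (by positivity)]; ring) hy
  have gtend : ∀ C E1 E2 : ℂ, Tendsto (fun x : ℝ =>
      C * (1 + (((x:ℝ):ℂ) * (E1 - E2)) / (1 + ((x:ℝ):ℂ) * E2))) (𝓝 0) (𝓝 C) := by
    intro C E1 E2
    have hc : ContinuousAt (fun x : ℝ =>
        C * (1 + (((x:ℝ):ℂ) * (E1 - E2)) / (1 + ((x:ℝ):ℂ) * E2))) 0 := by
      apply ContinuousAt.mul continuousAt_const
      apply ContinuousAt.add continuousAt_const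
      apply ContinuousAt.div (by fun_prop) (by fun_prop)
      simp
    simpa using hc.tendsto
  have hexp_top : Tendsto (fun y : ℝ => Real.exp (-2 * |y * R|)) atTop (𝓝 0) := by
    have habs : Tendsto (fun y : ℝ => 2 * |y * R|) atTop atTop :=
      (tendsto_abs_atTop_atTop.comp (tendsto_id.atTop_mul_const hR)).const_mul_atTop two_pos
    have := Real.tendsto_exp_neg_atTop_nhds_zero.comp habs
    refine this.congr fun y => ?_
    simp [Function.comp]
  have hexp_bot : Tendsto (fun y : ℝ => Real.exp (-2 * |y * R|)) atBot (𝓝 0) := by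
    have habs : Tendsto (fun y : ℝ => 2 * |y * R|) atBot atTop :=
      (tendsto_abs_atBot_atTop.comp (tendsto_id.atBot_mul_const hR)).const_mul_atTop two_pos
    have := Real.tendsto_exp_neg_atTop_nhds_zero.comp habs
    refine this.congr fun y => ?_
    simp [Function.comp]
  have part2 : Tendsto (cosQuot ν R a) atTop
      (𝓝 (Complex.exp (Complex.I * (ν : ℂ) * (Real.pi : ℂ)))) := by
    have h1' := (gtend (Complex.exp (Complex.I * (((1:ℝ)) : ℂ) * (ν : ℂ) * (Real.pi : ℂ)))
        (Complex.exp (Complex.I * (((1:ℝ)) : ℂ) * (((2 * a * R - ν * Real.pi + Real.pi / 2 : ℝ)) : ℂ)))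
        (Complex.exp (Complex.I * (((1:ℝ)) : ℂ) * (((2 * a * R + ν * Real.pi + Real.pi / 2 : ℝ)) : ℂ)))).comp
        hexp_top
    have heq : (fun y : ℝ => Complex.exp (Complex.I * (((1:ℝ)) : ℂ) * (ν : ℂ) * (Real.pi : ℂ)) *
          (1 + (((Real.exp (-2 * |y * R|) : ℝ) : ℂ) *
                (Complex.exp (Complex.I * (((1:ℝ)) : ℂ) *
                    (((2 * a * R - ν * Real.pi + Real.pi / 2 : ℝ)) : ℂ)) -
                 Complex.exp (Complex.I * (((1:ℝ)) : ℂ) *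
                    (((2 * a * R + ν * Real.pi + Real.pi / 2 : ℝ)) : ℂ)))) /
               (1 + ((Real.exp (-2 * |y * R|) : ℝ) : ℂ) *
                 Complex.exp (Complex.I * (((1:ℝ)) : ℂ) *
                    (((2 * a * R + ν * Real.pi + Real.pi / 2 : ℝ)) : ℂ)))))
        =ᶠ[atTop] cosQuot ν R a := by
      filter_upwards [eventually_gt_atTop (0:ℝ)] with y hy
      exact (hmain 1 (Or.inl rfl) y (by rw [abs_of_pos (by positivity)]; ring) hy.ne').symm
    have := h1'.congr' heq
    have hCeq : Complex.exp (Complex.I * (((1:ℝ)) : ℂ) * (ν : ℂ) * (Real.pi : ℂ))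
        = Complex.exp (Complex.I * (ν : ℂ) * (Real.pi : ℂ)) := by norm_num
    rwa [hCeq] at this
  have part3 : Tendsto (cosQuot ν R a) atBot
      (𝓝 (Complex.exp (-(Complex.I * (ν : ℂ) * (Real.pi : ℂ))))) := by
    have h1' := (gtend (Complex.exp (Complex.I * (((-1:ℝ)) : ℂ) * (ν : ℂ) * (Real.pi : ℂ)))
        (Complex.exp (Complex.I * (((-1:ℝ)) : ℂ) * (((2 * a * R - ν * Real.pi + Real.pi / 2 : ℝ)) : ℂ)))
        (Complex.exp (Complex.I * (((-1:ℝ)) : ℂ) * (((2 * a * R + ν * Real.pi + Real.pi / 2 : ℝ)) : ℂ)))).comp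
        hexp_bot
    have heq : (fun y : ℝ => Complex.exp (Complex.I * (((-1:ℝ)) : ℂ) * (ν : ℂ) * (Real.pi : ℂ)) *
          (1 + (((Real.exp (-2 * |y * R|) : ℝ) : ℂ) *
                (Complex.exp (Complex.I * (((-1:ℝ)) : ℂ) *
                    (((2 * a * R - ν * Real.pi + Real.pi / 2 : ℝ)) : ℂ)) -
                 Complex.exp (Complex.I * (((-1:ℝ)) : ℂ) *
                    (((2 * a * R + ν * Real.pi + Real.pi / 2 : ℝ)) : ℂ)))) /
               (1 + ((Real.exp (-2 * |y * R|) : ℝ) : ℂ) *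
                 Complex.exp (Complex.I * (((-1:ℝ)) : ℂ) *
                    (((2 * a * R + ν * Real.pi + Real.pi / 2 : ℝ)) : ℂ)))))
        =ᶠ[atBot] cosQuot ν R a := by
      filter_upwards [eventually_lt_atBot (0:ℝ)] with y hy
      exact (hmain (-1) (Or.inr rfl) y
        (by rw [abs_of_neg (by exact mul_neg_of_neg_of_pos hy hR)]; ring) hy.ne).symm
    have := h1'.congr' heq
    have hCeq : Complex.exp (Complex.I * (((-1:ℝ)) : ℂ) * (ν : ℂ) * (Real.pi : ℂ))
        = Complex.exp (-(Complex.I * (ν : ℂ) * (Real.pi : ℂ))) := by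
      congr 1; push_cast; ring
    rwa [hCeq] at this
  refine ⟨part1, part2, part3, ?_⟩
  have hcne1 : ∀ y : ℝ, Complex.cos ((θ₁:ℂ) + ((y*R : ℝ):ℂ) * I) ≠ 0 :=
    fun y => cos_ne_zero' θ₁ (y*R) h1
  have hcne2 : ∀ y : ℝ, Complex.cos ((θ₂:ℂ) + ((y*R : ℝ):ℂ) * I) ≠ 0 :=
    fun y => cos_ne_zero' θ₂ (y*R) h2
  have hne : ∀ y : ℝ, cosQuot ν R a y ≠ 0 := fun y => by
    rw [hq]; exact div_ne_zero (hcne1 y) (hcne2 y)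
  have hcont : Continuous (cosQuot ν R a) := by
    rw [funext hq]
    exact Continuous.div (by fun_prop) (by fun_prop) hcne2
  have hfc : Continuous (fun y : ℝ => ‖cosQuot ν R a y‖) :=
    continuous_norm.comp hcont
  have hfpos : ∀ y : ℝ, 0 < ‖cosQuot ν R a y‖ :=
    fun y => norm_pos_iff.mpr (hne y)
  have l1 : Tendsto (fun y : ℝ => ‖cosQuot ν R a y‖) atTop (𝓝 1) := by
    have := (continuous_norm.tendsto _).comp part2
    simpa [Function.comp_def, Complex.norm_exp, Complex.mul_re, Complex.I_re, Complex.I_im] using this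
  have l2 : Tendsto (fun y : ℝ => ‖cosQuot ν R a y‖) atBot (𝓝 1) := by
    have := (continuous_norm.tendsto _).comp part3
    simpa [Function.comp_def, Complex.norm_exp, Complex.mul_re, Complex.I_re, Complex.I_im] using this
  exact bdd_aux _ hfc hfpos l1 l2
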